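/- In the greedy pairing algorithm for the reversed reflection diamond, at each iteration j, if b_j has already been paired when j is processed, then the birth b_{ℓ_j} chosen as the ≤_b-minimum unpaired birth satisfies b_{ℓ_j} ≥_b b_j. -/
import Mathlib


/-- A run of the greedy pairing algorithm for the reversed reflection diamond.
Births are the values `b k` compared by the relation `leb`; `ell j` is the index of the
birth paired with death `d j` at step `j`, and `S j` is the set of indices whose births
have been paired after the first `j` steps (with the minimal birth `b (ell (p-1))` paired
initially, with the death `d (p-1)`). -/
structure GreedyRun (p : ℕ) {β : Type} (leb : β → β → Prop) (b : Fin p → β) where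
  hp : 0 < p
  ell : Fin p → Fin p
  S : ℕ → Finset (Fin p)
  /-- `b (ell (p-1))` is the minimal birth in the order `leb`. -/
  hlast : ∀ k, leb (b (ell ⟨p - 1, by omega⟩)) (b k)
  /-- initially only the minimal birth is paired (with the minimal death `d (p-1)`). -/
  hS0 : S 0 = {ell ⟨p - 1, by omega⟩}
  /-- the greedy step: at step `j` (for `j = 0,…,p-2`), if the birth `b j` is not yet
  paired then it is paired with `d j`; otherwise `d j` is paired with the `leb`-minimal
  not-yet-paired birth. -/
  hstep : ∀ j : ℕ, ∀ hj : j < p - 1,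
    if (⟨j, by omega⟩ : Fin p) ∈ S j then
      (ell ⟨j, by omega⟩ ∉ S j ∧
       (∀ k : Fin p, k ∉ S j → leb (b (ell ⟨j, by omega⟩)) (b k)) ∧
       S (j + 1) = insert (ell ⟨j, by omega⟩) (S j))
    else
      (ell ⟨j, by omega⟩ = ⟨j, by omega⟩ ∧ S (j + 1) = insert (⟨j, by omega⟩ : Fin p) (S j))

/-- **Monotonicity of the greedy choice.** In the greedy pairing algorithm, with deaths
sorted `d 0 ≥_d ⋯ ≥_d d (p-1)`, at each step `j < p - 1`, if the birth `b j` has already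
been paired, then the `≤_b`-minimal unpaired birth `b (ell j)` chosen by the algorithm
satisfies `b (ell j) ≥_b b j`. -/
theorem greedy_paired_choice_ge (p : ℕ) (β δ : Type)
    [LinearOrder β] [LinearOrder δ]
    (b : Fin p → β) (d : Fin p → δ)
    (hsorted : ∀ j k : Fin p, j ≤ k → d k ≤ d j)
    (run : GreedyRun p (· ≤ ·) b) :
    ∀ j : Fin p, (j : ℕ) < p - 1 → j ∈ run.S (j : ℕ) →
      b j ≤ b (run.ell j) := by
  intro j hj hjS
  have key : ∀ t : ℕ, t ≤ p - 1 → ∀ m : Fin p, m ∈ run.S t → t ≤ (m : ℕ) →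
      ∀ k : Fin p, k ∉ run.S t → b m ≤ b k := by
    intro t
    induction t with
    | zero =>
      intro _ m hm _ k _
      rw [run.hS0, Finset.mem_singleton] at hm
      subst hm
      exact run.hlast k
    | succ t ih =>
      intro ht m hm htm k hk
      have ht' : t < p - 1 := by omega
      have hstep := run.hstep t ht'
      by_cases hc : (⟨t, by omega⟩ : Fin p) ∈ run.S t
      · rw [if_pos hc] at hstep
        obtain ⟨h1, h2, h3⟩ := hstep
        rw [h3, Finset.mem_insert] at hm
        have hkS : k ∉ run.S t := fun h => hk (by rw [h3]; exact Finset.mem_insert_of_mem h)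
        rcases hm with hm | hm
        · subst hm; exact h2 k hkS
        · exact ih (by omega) m hm (by omega) k hkS
      · rw [if_neg hc] at hstep
        obtain ⟨h1, h3⟩ := hstep
        rw [h3, Finset.mem_insert] at hm
        have hkS : k ∉ run.S t := fun h => hk (by rw [h3]; exact Finset.mem_insert_of_mem h)
        rcases hm with hm | hm
        · exfalso
          have : (m : ℕ) = t := by rw [hm]
          omega
        · exact ih (by omega) m hm (by omega) k hkS
  have hstep := run.hstep (j : ℕ) hj
  have heq : (⟨(j : ℕ), by omega⟩ : Fin p) = j := Fin.ext rfl
  rw [heq, if_pos hjS] at hstep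
  exact key (j : ℕ) (by omega) j hjS le_rfl (run.ell j) hstep.1
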